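/- Let d ≥ 1 be an integer and let G be a finite group acting on a finite set X. Then χ^{(d)}(X;G) = Σ_{[g]} χ^{(d−1)}(X^{⟨g⟩}; C_G(g)), where the sum is over the conjugacy classes [g] of G, X^{⟨g⟩} = {x ∈ X : g·x = x} is the fixed-point set of g with the restricted action of the centralizer C_G(g), and the summand is independent of the choice of representative g of its conjugacy class. -/

import Mathlib

open scoped Classical in
/-- The `d`-th order orbifold Euler characteristic `χ^{(d)}(X;G)`. -/
noncomputable def orbChi (d : ℕ) (G : Type*) [Group G] (X : Type*) [MulAction G X] : ℚ :=
  (Nat.card G : ℚ)⁻¹ *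
    ∑ᶠ g : Fin (d + 1) → G,
      if ∀ i j, Commute (g i) (g j) then
        (Nat.card {x : X // ∀ i, g i • x = x} : ℚ) else 0

/-- `X^{⟨g⟩}`: the fixed point set of `g` on `X`. -/
def fixedBy1 {G : Type*} [Group G] (g : G) (X : Type*) [MulAction G X] : Type _ :=
  {x : X // g • x = x}

/-- The centralizer `C_G(g)` acts on the fixed point set `X^{⟨g⟩}`. -/
instance centralizerFixedBy1Action {G : Type*} [Group G] (g : G) (X : Type*)
    [MulAction G X] : MulAction ↥(Subgroup.centralizer {g}) (fixedBy1 g X) where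
  smul c x := ⟨(c : G) • x.1, by
    have hc : g * (c : G) = (c : G) * g :=
      Subgroup.mem_centralizer_iff.mp c.2 g rfl
    rw [← mul_smul, hc, mul_smul, x.2]⟩
  one_smul x := Subtype.ext <| by
    show ((1 : ↥(Subgroup.centralizer {g})) : G) • x.1 = x.1
    simp
  mul_smul a b x := Subtype.ext <| by
    show ((a * b : ↥(Subgroup.centralizer {g})) : G) • x.1 = (a : G) • (b : G) • x.1
    simp [mul_smul]

lemma orbChi_congr {G H : Type*} [Group G] [Group H] {X Y : Type*} [MulAction G X]
    [MulAction H Y] (e : G ≃* H) (σ : X ≃ Y) (hcom : ∀ (g : G) (x : X), σ (g • x) = e g • σ x)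
    (d : ℕ) : orbChi d G X = orbChi d H Y := by
  classical
  unfold orbChi
  rw [Nat.card_congr e.toEquiv]
  congr 1
  rw [← finsum_comp_equiv (Equiv.piCongrRight fun _ : Fin (d + 1) => e.toEquiv)]
  refine finsum_congr fun g => ?_
  simp only [Equiv.piCongrRight_apply, MulEquiv.toEquiv_eq_coe, EquivLike.coe_coe, Pi.map_apply]
  refine if_congr ?_ ?_ rfl
  · constructor
    · intro h i j
      have := h i j
      simpa only [Commute, SemiconjBy, ← map_mul, e.injective.eq_iff] using this
    · intro h i j
      simpa only [Commute, SemiconjBy, ← map_mul, e.injective.eq_iff] using h i j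
  · refine congrArg _ (Nat.card_congr (σ.subtypeEquiv fun x => ?_))
    constructor
    · intro h i; rw [← hcom, h]
    · intro h i; have := h i; rw [← hcom] at this; exact σ.injective this

def conjCentralizerEquiv {G : Type*} [Group G] {g h : G} (k : G) (hk : k * g * k⁻¹ = h) :
    ↥(Subgroup.centralizer {g}) ≃* ↥(Subgroup.centralizer {h}) where
  toFun c := ⟨k * c * k⁻¹, Subgroup.mem_centralizer_iff.mpr <| by
    rintro m rfl
    have hc : g * (c : G) = (c : G) * g := Subgroup.mem_centralizer_iff.mp c.2 g rfl
    subst hk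
    calc k * g * k⁻¹ * (k * ↑c * k⁻¹) = k * (g * ↑c) * k⁻¹ := by group
      _ = k * (↑c * g) * k⁻¹ := by rw [hc]
      _ = k * ↑c * k⁻¹ * (k * g * k⁻¹) := by group⟩
  invFun c := ⟨k⁻¹ * c * k, Subgroup.mem_centralizer_iff.mpr <| by
    intro m hm
    rw [Set.mem_singleton_iff] at hm
    rw [hm]
    have hc : h * (c : G) = (c : G) * h := Subgroup.mem_centralizer_iff.mp c.2 h rfl
    have hc' : (k * g * k⁻¹) * (c : G) = (c : G) * (k * g * k⁻¹) := by rw [hk]; exact hc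
    calc g * (k⁻¹ * ↑c * k) = k⁻¹ * ((k * g * k⁻¹) * ↑c) * k := by group
      _ = k⁻¹ * (↑c * (k * g * k⁻¹)) * k := by rw [hc']
      _ = k⁻¹ * ↑c * k * g := by group⟩
  left_inv c := Subtype.ext <| by
    show k⁻¹ * (k * ↑c * k⁻¹) * k = (c : G); group
  right_inv c := Subtype.ext <| by
    show k * (k⁻¹ * ↑c * k) * k⁻¹ = (c : G); group
  map_mul' a b := Subtype.ext <| by
    show k * (↑a * ↑b) * k⁻¹ = (k * ↑a * k⁻¹) * (k * ↑b * k⁻¹); group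

def conjFixEquiv {G : Type*} [Group G] (X : Type*) [MulAction G X] {g h : G} (k : G)
    (hk : k * g * k⁻¹ = h) : fixedBy1 g X ≃ fixedBy1 h X where
  toFun x := ⟨k • x.1, by
    rw [← hk, ← mul_smul, show k * g * k⁻¹ * k = k * g by group, mul_smul, x.2]⟩
  invFun y := ⟨k⁻¹ • y.1, by
    rw [← mul_smul, show g * k⁻¹ = k⁻¹ * (k * g * k⁻¹) by group, hk, mul_smul, y.2]⟩
  left_inv x := Subtype.ext <| by simp [inv_smul_smul]
  right_inv y := Subtype.ext <| by simp [smul_inv_smul]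

lemma orbChi_conj {G : Type*} [Group G] (X : Type*) [MulAction G X] {g h : G}
    (hc : IsConj g h) (d : ℕ) :
    orbChi d ↥(Subgroup.centralizer {g}) (fixedBy1 g X) =
      orbChi d ↥(Subgroup.centralizer {h}) (fixedBy1 h X) := by
  obtain ⟨k, hk⟩ := isConj_iff.mp hc
  refine orbChi_congr (conjCentralizerEquiv k hk) (conjFixEquiv X k hk) (fun c x => ?_) d
  refine Subtype.ext ?_
  show k • ((c : G) • x.1) = (k * ↑c * k⁻¹) • (k • x.1)
  rw [← mul_smul, ← mul_smul]
  congr 1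
  group

lemma card_centralizer_conj {G : Type*} [Group G] {g h : G} (hc : IsConj g h) :
    Nat.card ↥(Subgroup.centralizer {g}) = Nat.card ↥(Subgroup.centralizer {h}) := by
  obtain ⟨k, hk⟩ := isConj_iff.mp hc
  exact Nat.card_congr (conjCentralizerEquiv k hk).toEquiv

lemma sum_pi_succ {M : Type*} [AddCommMonoid M] {G : Type*} [Fintype G] (n : ℕ)
    (F : (Fin (n + 1) → G) → M) :
    ∑ g : Fin (n + 1) → G, F g = ∑ a : G, ∑ t : Fin n → G, F (Fin.cons a t) := by
  classical
  rw [Fintype.sum_equiv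
    (⟨fun f => (f 0, Fin.tail f), fun p => Fin.cons p.1 p.2,
      fun f => Fin.cons_self_tail f, fun p => by simp⟩ :
        (Fin (n + 1) → G) ≃ G × (Fin n → G))
    F (fun p => F (Fin.cons p.1 p.2)) (fun f => by simp [Fin.cons_self_tail]),
    Fintype.sum_prod_type]

open scoped Classical in
lemma inner_sum_eq {G X : Type} [Group G] [Fintype G] [MulAction G X] [Finite X] (n : ℕ)
    (a : G) :
    (∑ t : Fin (n + 1) → G,
      if ∀ i j, Commute ((Fin.cons a t : Fin (n + 1 + 1) → G) i)
          ((Fin.cons a t : Fin (n + 1 + 1) → G) j) then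
        (Nat.card {x : X // ∀ i, (Fin.cons a t : Fin (n + 1 + 1) → G) i • x = x} : ℚ)
      else 0) =
    (Nat.card ↥(Subgroup.centralizer {a}) : ℚ) *
      orbChi n ↥(Subgroup.centralizer {a}) (fixedBy1 a X) := by
  classical
  set C := Subgroup.centralizer ({a} : Set G) with hC
  -- the commuting condition splits
  have key : ∀ t : Fin (n + 1) → G,
      (∀ i j, Commute ((Fin.cons a t : Fin (n + 1 + 1) → G) i)
          ((Fin.cons a t : Fin (n + 1 + 1) → G) j)) ↔
        ((∀ i, t i ∈ C) ∧ ∀ i j, Commute (t i) (t j)) := by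
    intro t
    constructor
    · intro h
      refine ⟨fun i => Subgroup.mem_centralizer_iff.mpr ?_, fun i j => ?_⟩
      · intro m hm
        rw [Set.mem_singleton_iff] at hm
        rw [hm]
        have h0 := h 0 i.succ
        rw [Fin.cons_zero, Fin.cons_succ] at h0
        exact h0
      · have hs := h i.succ j.succ
        rw [Fin.cons_succ, Fin.cons_succ] at hs
        exact hs
    · rintro ⟨h1, h2⟩ i j
      have ha : ∀ i, Commute a (t i) := fun i =>
        Subgroup.mem_centralizer_iff.mp (h1 i) a rfl
      refine Fin.cases ?_ (fun i' => ?_) i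
      · rw [Fin.cons_zero]
        refine Fin.cases ?_ (fun j' => ?_) j
        · rw [Fin.cons_zero]
        · rw [Fin.cons_succ]; exact ha j'
      · refine Fin.cases ?_ (fun j' => ?_) j
        · rw [Fin.cons_zero, Fin.cons_succ]; exact (ha i').symm
        · rw [Fin.cons_succ, Fin.cons_succ]; exact h2 i' j'
  have hcard : ∀ t : Fin (n + 1) → G,
      Nat.card {x : X // ∀ i, (Fin.cons a t : Fin (n + 1 + 1) → G) i • x = x} =
        Nat.card {x : X // a • x = x ∧ ∀ i, t i • x = x} := by
    intro t
    refine Nat.card_congr (Equiv.subtypeEquivRight fun x => ?_)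
    constructor
    · intro h
      refine ⟨by simpa using h 0, fun i => by simpa using h i.succ⟩
    · rintro ⟨h1, h2⟩ i
      refine Fin.cases ?_ (fun i' => ?_) i
      · simpa using h1
      · simpa using h2 i'
  set f : (Fin (n + 1) → G) → ℚ := fun t =>
    if ∀ i j, Commute (t i) (t j) then
      (Nat.card {x : X // a • x = x ∧ ∀ i, t i • x = x} : ℚ) else 0 with hf
  have hterm : ∀ t : Fin (n + 1) → G,
      (if ∀ i j, Commute ((Fin.cons a t : Fin (n + 1 + 1) → G) i)
            ((Fin.cons a t : Fin (n + 1 + 1) → G) j) then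
          (Nat.card {x : X // ∀ i, (Fin.cons a t : Fin (n + 1 + 1) → G) i • x = x} : ℚ)
        else 0) =
        (if (∀ i, t i ∈ C) then f t else 0) := by
    intro t
    rw [hf]
    rw [if_congr (key t) (by rw [hcard t]) rfl, ite_and]
  rw [Finset.sum_congr rfl fun t _ => hterm t]
  rw [← Finset.sum_filter]
  rw [Finset.sum_subtype (p := fun t : Fin (n + 1) → G => ∀ i, t i ∈ C)
      (Finset.univ.filter fun t => ∀ i, t i ∈ C) (by simp) f]
  rw [Fintype.sum_equiv (Equiv.subtypePiEquivPi
        (β := fun _ : Fin (n + 1) => G) (p := fun _ x => x ∈ C))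
      _ (fun u => if ∀ i j, Commute (u i) (u j) then
          (Nat.card {x : fixedBy1 a X // ∀ i, u i • x = x} : ℚ) else 0) ?_]
  · rw [orbChi, finsum_eq_sum_of_fintype, ← mul_assoc,
      mul_inv_cancel₀ (Nat.cast_ne_zero.mpr Nat.card_pos.ne'), one_mul]
  · intro t
    refine if_congr ?_ ?_ rfl
    · constructor
      · intro h i j
        exact Subtype.ext (h i j)
      · intro h i j
        exact congrArg Subtype.val (h i j)
    · refine congrArg _ (Nat.card_congr ?_)
      exact {
        toFun := fun w => ⟨⟨w.1, w.2.1⟩, fun i => Subtype.ext (w.2.2 i)⟩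
        invFun := fun z => ⟨z.1.1, z.1.2, fun i => congrArg Subtype.val (z.2 i)⟩
        left_inv := fun w => rfl
        right_inv := fun z => Subtype.ext (Subtype.ext rfl) }

open scoped Classical in
lemma orbChi_succ {G X : Type} [Group G] [Fintype G] [MulAction G X] [Finite X] (n : ℕ) :
    orbChi (n + 1) G X = (Nat.card G : ℚ)⁻¹ *
      ∑ a : G, (Nat.card ↥(Subgroup.centralizer {a}) : ℚ) *
        orbChi n ↥(Subgroup.centralizer {a}) (fixedBy1 a X) := by
  rw [orbChi, finsum_eq_sum_of_fintype]
  congr 1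
  rw [sum_pi_succ (n := n + 1) (F := fun g : Fin (n + 1 + 1) → G =>
    if ∀ i j, Commute (g i) (g j) then
      (Nat.card {x : X // ∀ i, g i • x = x} : ℚ) else 0)]
  exact Finset.sum_congr rfl fun a _ => inner_sum_eq n a

open scoped Classical in
lemma card_filter_mul_card_centralizer {G : Type} [Group G] [Fintype G]
    (c : Quotient (IsConj.setoid G)) :
    (Finset.univ.filter fun a : G => Quotient.mk (IsConj.setoid G) a = c).card *
      Nat.card ↥(Subgroup.centralizer {Quotient.out c}) = Nat.card G := by
  classical
  set g0 := Quotient.out c with hg0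
  have hmem : ∀ a : G, (Quotient.mk (IsConj.setoid G) a = c) ↔ IsConj a g0 := by
    intro a
    constructor
    · intro h
      exact Quotient.exact (h.trans (Quotient.out_eq c).symm)
    · intro h
      rw [← Quotient.out_eq c]
      exact Quotient.sound h
  have hFc : Fintype (ConjAct G) := ‹Fintype G›
  have e1 : {a : G // Quotient.mk (IsConj.setoid G) a = c} ≃
      MulAction.orbit (ConjAct G) g0 :=
    Equiv.subtypeEquivRight fun a => by
      rw [hmem a, ← ConjAct.mem_orbit_conjAct]
  have e2 : ↥(Subgroup.centralizer {g0}) ≃ ↥(MulAction.stabilizer (ConjAct G) g0) :=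
    Equiv.subtypeEquiv ConjAct.toConjAct.toEquiv fun x => by
      rw [Subgroup.centralizer_eq_comap_stabilizer]
      exact Iff.rfl
  have horb := MulAction.card_orbit_mul_card_stabilizer_eq_card_group (ConjAct G) g0
  calc (Finset.univ.filter fun a : G => Quotient.mk (IsConj.setoid G) a = c).card *
        Nat.card ↥(Subgroup.centralizer {g0})
      = Fintype.card {a : G // Quotient.mk (IsConj.setoid G) a = c} *
        Fintype.card ↥(Subgroup.centralizer {g0}) := by
        rw [Fintype.card_subtype, Nat.card_eq_fintype_card]
    _ = Fintype.card (MulAction.orbit (ConjAct G) g0) *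
        Fintype.card (MulAction.stabilizer (ConjAct G) g0) := by
        rw [Fintype.card_congr e1, Fintype.card_congr e2]
    _ = Fintype.card (ConjAct G) := horb
    _ = Nat.card G := by
        rw [Nat.card_eq_fintype_card]
        exact Fintype.card_congr ConjAct.ofConjAct.toEquiv

/-- **Proposition 2-5** (formula (2-11)): the summand is conjugation invariant, and
`χ^{(d)}(X;G) = Σ_{[g]} χ^{(d-1)}(X^{⟨g⟩}; C_G(g))`, the sum being over the conjugacy
classes of `G`. -/
theorem orbChi_eq_sum_conjClasses (d : ℕ) (hd : 1 ≤ d)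
    (G X : Type) [Group G] [Finite G] [MulAction G X] [Finite X] :
    (∀ g h : G, IsConj g h →
      orbChi (d - 1) ↥(Subgroup.centralizer {g}) (fixedBy1 g X) =
        orbChi (d - 1) ↥(Subgroup.centralizer {h}) (fixedBy1 h X)) ∧
      orbChi d G X =
        ∑ᶠ c : Quotient (IsConj.setoid G),
          orbChi (d - 1) ↥(Subgroup.centralizer {Quotient.out c})
            (fixedBy1 (Quotient.out c) X) := by
  classical
  obtain ⟨n, rfl⟩ : ∃ n, d = n + 1 := ⟨d - 1, (Nat.succ_pred_eq_of_pos hd).symm⟩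
  simp only [Nat.add_sub_cancel]
  refine ⟨fun g h hc => orbChi_conj X hc n, ?_⟩
  have := Fintype.ofFinite G
  rw [orbChi_succ n, finsum_eq_sum_of_fintype]
  rw [← Finset.sum_fiberwise Finset.univ (fun a : G => Quotient.mk (IsConj.setoid G) a)
      (fun a => (Nat.card ↥(Subgroup.centralizer {a}) : ℚ) *
        orbChi n ↥(Subgroup.centralizer {a}) (fixedBy1 a X))]
  rw [Finset.mul_sum]
  refine Finset.sum_congr rfl fun c _ => ?_
  have hG0 : (Nat.card G : ℚ) ≠ 0 := Nat.cast_ne_zero.mpr Nat.card_pos.ne'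
  have hsum : ∑ a ∈ Finset.univ.filter
        (fun a : G => Quotient.mk (IsConj.setoid G) a = c),
      (Nat.card ↥(Subgroup.centralizer {a}) : ℚ) *
        orbChi n ↥(Subgroup.centralizer {a}) (fixedBy1 a X) =
      (Finset.univ.filter fun a : G => Quotient.mk (IsConj.setoid G) a = c).card *
        ((Nat.card ↥(Subgroup.centralizer {Quotient.out c}) : ℚ) *
          orbChi n ↥(Subgroup.centralizer {Quotient.out c})
            (fixedBy1 (Quotient.out c) X)) := by
    rw [Finset.sum_congr rfl fun a ha => ?_, Finset.sum_const, nsmul_eq_mul]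
    have hconj : IsConj a (Quotient.out c) := by
      have h := (Finset.mem_filter.mp ha).2
      exact Quotient.exact (h.trans (Quotient.out_eq c).symm)
    rw [card_centralizer_conj hconj, orbChi_conj X hconj n]
  have hcc : ((Finset.univ.filter fun a : G =>
      Quotient.mk (IsConj.setoid G) a = c).card : ℚ) *
      (Nat.card ↥(Subgroup.centralizer {Quotient.out c}) : ℚ) = (Nat.card G : ℚ) := by
    rw [← Nat.cast_mul, card_filter_mul_card_centralizer c]
  rw [hsum, ← mul_assoc ((Finset.univ.filter fun a : G =>
      Quotient.mk (IsConj.setoid G) a = c).card : ℚ), hcc, inv_mul_cancel_left₀ hG0]
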